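/- Let A ∈ ℝ^{d_c×d} have full row rank d_c < d, and let Ã ∈ ℝ^{(d−d_c)×d} be a matrix whose rows form a basis of the orthogonal complement of the row space of A (so AÃᵀ = 0). Then for any symmetric positive definite Σ ∈ ℝ^{d×d}, the identity I_d = Σ^{1/2}Aᵀ(AΣAᵀ)^{-1}AΣ^{1/2} + Σ^{-1/2}Ãᵀ(ÃΣ^{-1}Ãᵀ)^{-1}ÃΣ^{-1/2} holds. -/

import Mathlib

open Matrix

/-- A square real matrix of full rank is a unit. -/
lemma isUnit_of_rank_eq_card {n : Type*} [Fintype n] [DecidableEq n]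
    (M : Matrix n n ℝ) (h : M.rank = Fintype.card n) : IsUnit M := by
  rw [← Matrix.mulVec_surjective_iff_isUnit]
  have hr : LinearMap.range M.mulVecLin = ⊤ := by
    apply Submodule.eq_top_of_finrank_eq
    rw [show Module.finrank ℝ (LinearMap.range M.mulVecLin) = M.rank from rfl, h,
      Module.finrank_pi]
  intro v
  obtain ⟨x, hx⟩ := LinearMap.range_eq_top.mp hr v
  exact ⟨x, hx⟩

/-- Partition-of-unity identity: for `A` of full row rank `dc < d`, `At` whose rows
form a basis of the orthogonal complement of the row space of `A` (so `A * Atᵀ = 0`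
and `At.rank = d - dc`), and `Sg` symmetric positive definite with symmetric positive
definite square root `S` (i.e. `S.PosDef` and `S * S = Sg`),
`I = Σ^{1/2} Aᵀ (A Σ Aᵀ)⁻¹ A Σ^{1/2} + Σ^{-1/2} Ãᵀ (Ã Σ⁻¹ Ãᵀ)⁻¹ Ã Σ^{-1/2}`. -/
theorem partition_of_unity {d dc : ℕ} (hdc : dc < d)
    (A : Matrix (Fin dc) (Fin d) ℝ) (hA : A.rank = dc)
    (At : Matrix (Fin (d - dc)) (Fin d) ℝ)
    (hAAt : A * Atᵀ = 0) (hAt : At.rank = d - dc)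
    (Sg : Matrix (Fin d) (Fin d) ℝ) (hSg : Sg.PosDef)
    (S : Matrix (Fin d) (Fin d) ℝ) (hS : S.PosDef) (hSS : S * S = Sg) :
    (1 : Matrix (Fin d) (Fin d) ℝ) =
      S * Aᵀ * (A * Sg * Aᵀ)⁻¹ * A * S +
        S⁻¹ * Atᵀ * (At * Sg⁻¹ * Atᵀ)⁻¹ * At * S⁻¹ := by
  classical
  have hSdet : IsUnit S.det := isUnit_iff_ne_zero.mpr hS.det_pos.ne'
  have hSidet : IsUnit (S⁻¹).det := isUnit_iff_ne_zero.mpr hS.inv.det_pos.ne'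
  have hST : Sᵀ = S := by
    rw [← conjTranspose_eq_transpose_of_trivial]; exact hS.isHermitian
  have hSiT : (S⁻¹)ᵀ = S⁻¹ := by rw [transpose_nonsing_inv, hST]
  set B : Matrix (Fin dc) (Fin d) ℝ := A * S with hB
  set C : Matrix (Fin (d - dc)) (Fin d) ℝ := At * S⁻¹ with hC
  have hBt : Bᵀ = S * Aᵀ := by rw [hB, transpose_mul, hST]
  have hCt : Cᵀ = S⁻¹ * Atᵀ := by rw [hC, transpose_mul, hSiT]
  have hSginv : Sg⁻¹ = S⁻¹ * S⁻¹ := by rw [← hSS, Matrix.mul_inv_rev]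
  have hBBt : B * Bᵀ = A * Sg * Aᵀ := by
    rw [hB, hBt, ← hSS]; simp only [Matrix.mul_assoc]
  have hCCt : C * Cᵀ = At * Sg⁻¹ * Atᵀ := by
    rw [hC, hCt, hSginv]; simp only [Matrix.mul_assoc]
  have hBCt : B * Cᵀ = 0 := by
    rw [hB, hCt, Matrix.mul_assoc, ← Matrix.mul_assoc S S⁻¹ Atᵀ,
      mul_nonsing_inv _ hSdet, Matrix.one_mul]
    exact hAAt
  have hCBt : C * Bᵀ = 0 := by
    have := congrArg transpose hBCt
    rwa [transpose_mul, transpose_transpose, transpose_zero] at this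
  have hrB : B.rank = dc := by
    rw [hB, rank_mul_eq_left_of_isUnit_det S A hSdet, hA]
  have hrC : C.rank = d - dc := by
    rw [hC, rank_mul_eq_left_of_isUnit_det S⁻¹ At hSidet, hAt]
  have hUB : IsUnit (B * Bᵀ) :=
    isUnit_of_rank_eq_card _ (by rw [rank_self_mul_transpose, hrB, Fintype.card_fin])
  have hUC : IsUnit (C * Cᵀ) :=
    isUnit_of_rank_eq_card _ (by rw [rank_self_mul_transpose, hrC, Fintype.card_fin])
  have key : fromRows B C * fromCols (Bᵀ * (B * Bᵀ)⁻¹) (Cᵀ * (C * Cᵀ)⁻¹) = 1 := by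
    rw [fromRows_mul_fromCols]
    have h1 : B * (Bᵀ * (B * Bᵀ)⁻¹) = 1 := by
      rw [← Matrix.mul_assoc, mul_nonsing_inv _ ((isUnit_iff_isUnit_det _).mp hUB)]
    have h2 : B * (Cᵀ * (C * Cᵀ)⁻¹) = 0 := by
      rw [← Matrix.mul_assoc, hBCt, Matrix.zero_mul]
    have h3 : C * (Bᵀ * (B * Bᵀ)⁻¹) = 0 := by
      rw [← Matrix.mul_assoc, hCBt, Matrix.zero_mul]
    have h4 : C * (Cᵀ * (C * Cᵀ)⁻¹) = 1 := by
      rw [← Matrix.mul_assoc, mul_nonsing_inv _ ((isUnit_iff_isUnit_det _).mp hUC)]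
    rw [h1, h2, h3, h4, fromBlocks_one]
  have e : Fin d ≃ Fin dc ⊕ Fin (d - dc) :=
    (finCongr (Nat.add_sub_cancel' hdc.le).symm).trans finSumFinEquiv.symm
  have key2 : fromCols (Bᵀ * (B * Bᵀ)⁻¹) (Cᵀ * (C * Cᵀ)⁻¹) * fromRows B C = 1 :=
    (fromCols_mul_fromRows_eq_one_comm e _ _ _ _).mpr key
  rw [fromCols_mul_fromRows] at key2
  rw [← hBBt, ← hCCt, ← hBt, ← hCt, ← key2]
  simp only [Matrix.mul_assoc]
  rfl
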